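/- arXiv:2306.08654 — 3 statements merged into one kernel-verified Lean document; each statement's English description precedes it below -/
import Mathlib

section
/- Let 0 < σ ≤ 1, φ ∈ C¹([a,b]) with φ' > 0, and n ∈ ℕ with n ≥ 1. Define the proportional integral (ₐI^{n,σ,φ} f)(t) = (1/(σⁿ Γ(n))) ∫ₐᵗ e^{((σ−1)/σ)(φ(t)−φ(τ))} (φ(t)−φ(τ))^{n−1} f(τ) φ'(τ) dτ. Then for n = 1 and continuous f, the function t ↦ (ₐI^{1,σ,φ} f)(t) is differentiable and satisfies D^{σ,φ}(ₐI^{1,σ,φ} f)(t) = f(t) for all t ∈ (a,b), where (D^{σ,φ} g)(t) = (1−σ)g(t) + σ g'(t)/φ'(t). -/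
open Real intervalIntegral

/-- The proportional integral of order `n` with respect to `φ`:
`(ₐI^{n,σ,φ} f)(t) = (1/(σⁿ Γ(n))) ∫ₐᵗ e^{((σ−1)/σ)(φ(t)−φ(τ))} (φ(t)−φ(τ))^{n−1} f(τ) φ'(τ) dτ`. -/
noncomputable def propIntN (n : ℕ) (σ : ℝ) (φ f : ℝ → ℝ) (a t : ℝ) : ℝ :=
  (1 / (σ ^ n * Real.Gamma n)) *
    ∫ τ in a..t, Real.exp (((σ - 1) / σ) * (φ t - φ τ)) * (φ t - φ τ) ^ (n - 1)
      * f τ * deriv φ τ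

/-- For `n = 1`, continuous `f`, and `φ ∈ C¹` with `φ' > 0`,
`t ↦ (ₐI^{1,σ,φ} f)(t)` is differentiable on `(a,b)` and
`D^{σ,φ}(ₐI^{1,σ,φ} f)(t) = f(t)`, with `(D^{σ,φ} g)(t) = (1−σ)g(t) + σ g'(t)/φ'(t)`. -/
theorem propInt_one_inverse (σ : ℝ) (hσ0 : 0 < σ) (hσ1 : σ ≤ 1)
    (a b : ℝ) (hab : a < b) (φ f : ℝ → ℝ)
    (hφ : ContDiff ℝ 1 φ) (hφ' : ∀ t ∈ Set.Icc a b, 0 < deriv φ t)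
    (hf : ContinuousOn f (Set.Icc a b)) :
    ∀ t ∈ Set.Ioo a b,
      DifferentiableAt ℝ (propIntN 1 σ φ f a) t ∧
      (1 - σ) * propIntN 1 σ φ f a t + σ * deriv (propIntN 1 σ φ f a) t / deriv φ t
        = f t := by
  intro t ht
  have htIcc : t ∈ Set.Icc a b := Set.mem_Icc_of_Ioo ht
  set c : ℝ := (σ - 1) / σ with hc
  have hσne : σ ≠ 0 := ne_of_gt hσ0
  have hφ'cont : Continuous (deriv φ) := hφ.continuous_deriv le_rfl
  have hφcont : Continuous φ := hφ.continuous
  set G : ℝ → ℝ := fun τ => Real.exp (-(c * φ τ)) * f τ * deriv φ τ with hG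
  have hGcont : ContinuousOn G (Set.Icc a b) := by
    apply ContinuousOn.mul
    · exact (((hφcont.continuousOn.const_smul c).neg.rexp).mul hf)
    · exact hφ'cont.continuousOn
  set F : ℝ → ℝ := fun s => ∫ τ in a..s, G τ with hF
  have hrepr : propIntN 1 σ φ f a = fun s => (1 / σ) * (Real.exp (c * φ s) * F s) := by
    funext s
    simp only [propIntN, pow_one, Nat.cast_one, Real.Gamma_one, mul_one, hF]
    rw [← intervalIntegral.integral_const_mul, ← intervalIntegral.integral_const_mul,
      ← intervalIntegral.integral_const_mul]
    apply intervalIntegral.integral_congr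
    intro τ _
    simp only [hG, Nat.sub_self, pow_zero, mul_one]
    rw [mul_sub, Real.exp_sub, Real.exp_neg]
    ring
  -- derivative of F at t
  have hsub : Set.uIcc a t ⊆ Set.Icc a b := by
    rw [Set.uIcc_of_le ht.1.le]
    exact Set.Icc_subset_Icc le_rfl ht.2.le
  have hGint : IntervalIntegrable G MeasureTheory.volume a t :=
    (hGcont.mono hsub).intervalIntegrable
  have hmem : Set.Icc a b ∈ nhds t := Icc_mem_nhds ht.1 ht.2
  have hGat : ContinuousAt G t := hGcont.continuousAt hmem
  have hmeas : StronglyMeasurableAtFilter G (nhds t) :=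
    ⟨Set.Icc a b, hmem, (hGcont.aemeasurable measurableSet_Icc).aestronglyMeasurable⟩
  have hF' : HasDerivAt F (G t) t :=
    intervalIntegral.integral_hasDerivAt_right hGint hmeas hGat
  -- derivative of exp (c * φ s)
  have hφd : HasDerivAt φ (deriv φ t) t := (hφ.differentiable one_ne_zero t).hasDerivAt
  have hE : HasDerivAt (fun s => Real.exp (c * φ s)) (Real.exp (c * φ t) * (c * deriv φ t)) t :=
    (hφd.const_mul c).exp
  have hg : HasDerivAt (propIntN 1 σ φ f a)
      ((1 / σ) * (Real.exp (c * φ t) * (c * deriv φ t) * F t + Real.exp (c * φ t) * G t)) t := by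
    rw [hrepr]
    exact (hE.mul hF').const_mul (1 / σ)
  refine ⟨hg.differentiableAt, ?_⟩
  rw [hg.deriv]
  have hφ't : deriv φ t ≠ 0 := ne_of_gt (hφ' t htIcc)
  have hval : propIntN 1 σ φ f a t = (1 / σ) * (Real.exp (c * φ t) * F t) := by rw [hrepr]
  rw [hval]
  simp only [hG, Real.exp_neg]
  have hexp : Real.exp (c * φ t) ≠ 0 := Real.exp_ne_zero _
  field_simp [hc]
  have hσc : σ * c = σ - 1 := by rw [hc]; field_simp
  linear_combination (Real.exp (c * φ t) * F t) * hσc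
end

section
/- Let ψ be a structural set of ℍ, let σ ∈ ℍ be invertible, and let δ = σ⁻¹(1−σ) = Σ_k ψ_k δ_k with δ_k ∈ ℝ. For f ∈ C¹(Ω, ℍ) define ᵠD^{σ} f = (1−σ)f + σ ᵠD f. Then for every x ∈ Ω: e^{−Σ_k x_k δ_k} · σ · ᵠD[ e^{Σ_k x_k δ_k} f ](x) = (ᵠD^{σ} f)(x), where e^{Σ_k x_k δ_k} is the (real) scalar exponential factor. -/
open scoped Quaternion

/-- A structural set of quaternions. -/
def IsStructuralSet (ψ : Fin 4 → ℍ[ℝ]) : Prop :=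
  ∀ k s : Fin 4,
    (1 / 2 : ℝ) • (star (ψ k) * ψ s + star (ψ s) * ψ k) = if k = s then 1 else 0

/-- Partial derivative `∂_k f` of an ℍ-valued function on ℝ⁴. -/
noncomputable def pderivQ (k : Fin 4) (f : (Fin 4 → ℝ) → ℍ[ℝ]) (x : Fin 4 → ℝ) : ℍ[ℝ] :=
  fderiv ℝ f x (Pi.single k 1)

/-- Partial derivative `∂_k u` of a real-valued function on ℝ⁴. -/
noncomputable def pderivR (k : Fin 4) (u : (Fin 4 → ℝ) → ℝ) (x : Fin 4 → ℝ) : ℝ :=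
  fderiv ℝ u x (Pi.single k 1)

/-- The left ψ-Fueter operator `ᵠD[f] = Σ_k ψ_k ∂_k f`. -/
noncomputable def fueterL (ψ : Fin 4 → ℍ[ℝ]) (f : (Fin 4 → ℝ) → ℍ[ℝ]) (x : Fin 4 → ℝ) :
    ℍ[ℝ] := ∑ k : Fin 4, ψ k * pderivQ k f x

/-- The right ψ-Fueter operator `ᵠD_r[g] = Σ_k (∂_k g) ψ_k`. -/
noncomputable def fueterR (ψ : Fin 4 → ℍ[ℝ]) (g : (Fin 4 → ℝ) → ℍ[ℝ]) (x : Fin 4 → ℝ) :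
    ℍ[ℝ] := ∑ k : Fin 4, pderivQ k g x * ψ k

/-- with `σ ∈ ℍ` invertible, `δ = σ⁻¹(1−σ) = Σ_k ψ_k δ_k` (`δ_k ∈ ℝ`), and
`ᵠD^{σ} f = (1−σ)f + σ ᵠD f`, one has
`e^{−Σ x_k δ_k} σ ᵠD[e^{Σ x_k δ_k} f](x) = (ᵠD^{σ} f)(x)`. -/
theorem fueterL_prop_conjugation (ψ : Fin 4 → ℍ[ℝ]) (hψ : IsStructuralSet ψ)
    (Ω : Set (Fin 4 → ℝ)) (hΩ : IsOpen Ω)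
    (σ : ℍ[ℝ]) (hσ : σ ≠ 0) (δ : Fin 4 → ℝ)
    (hδ : σ⁻¹ * (1 - σ) = ∑ k : Fin 4, δ k • ψ k)
    (f : (Fin 4 → ℝ) → ℍ[ℝ]) (hf : ContDiffOn ℝ 1 f Ω)
    (x : Fin 4 → ℝ) (hx : x ∈ Ω) :
    Real.exp (-∑ k : Fin 4, x k * δ k) •
        (σ * fueterL ψ (fun y => Real.exp (∑ k : Fin 4, y k * δ k) • f y) x)
      = (1 - σ) * f x + σ * fueterL ψ f x := by
  classical
  set S : ℝ := ∑ k : Fin 4, x k * δ k with hS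
  have hfd : DifferentiableAt ℝ f x :=
    ((hf.contDiffAt (hΩ.mem_nhds hx)).differentiableAt one_ne_zero)
  set L : (Fin 4 → ℝ) →L[ℝ] ℝ :=
    ∑ k : Fin 4, δ k • (ContinuousLinearMap.proj k : (Fin 4 → ℝ) →L[ℝ] ℝ) with hL
  have hLs : ∀ y, L y = ∑ k : Fin 4, y k * δ k := by
    intro y
    simp [hL, ContinuousLinearMap.sum_apply, mul_comm]
  have hLsingle : ∀ k : Fin 4, L (Pi.single k 1) = δ k := by
    intro k
    rw [hLs]
    simp [Pi.single_apply]
  have hexp : HasFDerivAt (fun y => Real.exp (∑ k : Fin 4, y k * δ k))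
      (Real.exp S • L) x := by
    have h1 : HasFDerivAt (fun y => ∑ k : Fin 4, y k * δ k) L x := by
      have h := L.hasFDerivAt (x := x)
      convert h using 1
      funext y
      rw [hLs]
    simpa [hS] using h1.exp
  have hgf : HasFDerivAt (fun y => Real.exp (∑ k : Fin 4, y k * δ k) • f y)
      (Real.exp S • fderiv ℝ f x + (Real.exp S • L).smulRight (f x)) x :=
    hexp.smul hfd.hasFDerivAt
  have hp : ∀ k : Fin 4, pderivQ k (fun y => Real.exp (∑ j : Fin 4, y j * δ j) • f y) x
      = Real.exp S • pderivQ k f x + (Real.exp S * δ k) • f x := by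
    intro k
    rw [pderivQ, hgf.fderiv]
    simp [pderivQ, hLsingle, smul_smul]
  have hfu : fueterL ψ (fun y => Real.exp (∑ j : Fin 4, y j * δ j) • f y) x
      = Real.exp S • ((σ⁻¹ * (1 - σ)) * f x + fueterL ψ f x) := by
    rw [fueterL]
    have : ∀ k : Fin 4,
        ψ k * pderivQ k (fun y => Real.exp (∑ j : Fin 4, y j * δ j) • f y) x
          = Real.exp S • (ψ k * pderivQ k f x) + Real.exp S • ((δ k • ψ k) * f x) := by
      intro k
      rw [hp k, mul_add]
      rw [mul_smul_comm, mul_smul_comm, mul_smul, smul_mul_assoc]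
    simp only [this, Finset.sum_add_distrib, ← Finset.smul_sum, ← Finset.sum_mul]
    rw [← hδ, fueterL, smul_add, add_comm]
  rw [hfu, mul_smul_comm, smul_smul, ← Real.exp_add, neg_add_cancel, Real.exp_zero,
    one_smul, mul_add, ← mul_assoc, ← mul_assoc σ σ⁻¹, mul_inv_cancel₀ hσ, one_mul]
end

section
/- Let ψ be a structural set of ℍ, let ρ ∈ ℍ be invertible with γ := ρ⁻¹(1−ρ) = Σ_k ψ_k γ_k, γ_k ∈ ℝ. For f ∈ C¹(Ω, ℍ) define the right operator ᵠD_r^{ρ} f = f(1−ρ) + (ᵠD_r f)ρ, where ᵠD_r f = Σ_k (∂_k f)ψ_k. Then e^{−Σ_k x_k γ_k} · ᵠD_r[ e^{Σ_k x_k γ_k} f ](x) · ρ = (ᵠD_r^{ρ} f)(x) for all x ∈ Ω. -/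
open scoped Quaternion

/-- right-operator counterpart. With `ρ ∈ ℍ` invertible,
`γ = ρ⁻¹(1−ρ) = Σ_k ψ_k γ_k` (`γ_k ∈ ℝ`), and `ᵠD_r^{ρ} f = f(1−ρ) + (ᵠD_r f)ρ`, one has
`e^{−Σ x_k γ_k} ᵠD_r[e^{Σ x_k γ_k} f](x) ρ = (ᵠD_r^{ρ} f)(x)`. -/
theorem fueterR_prop_conjugation (ψ : Fin 4 → ℍ[ℝ]) (hψ : IsStructuralSet ψ)
    (Ω : Set (Fin 4 → ℝ)) (hΩ : IsOpen Ω)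
    (ρ : ℍ[ℝ]) (hρ : ρ ≠ 0) (γ : Fin 4 → ℝ)
    (hγ : ρ⁻¹ * (1 - ρ) = ∑ k : Fin 4, γ k • ψ k)
    (f : (Fin 4 → ℝ) → ℍ[ℝ]) (hf : ContDiffOn ℝ 1 f Ω)
    (x : Fin 4 → ℝ) (hx : x ∈ Ω) :
    Real.exp (-∑ k : Fin 4, x k * γ k) •
        (fueterR ψ (fun y => Real.exp (∑ k : Fin 4, y k * γ k) • f y) x * ρ)
      = f x * (1 - ρ) + fueterR ψ f x * ρ := by
  have hfd : DifferentiableAt ℝ f x :=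
    ((hf.contDiffAt (hΩ.mem_nhds hx)).differentiableAt one_ne_zero)
  set L : (Fin 4 → ℝ) →L[ℝ] ℝ :=
    ∑ k : Fin 4, γ k • (ContinuousLinearMap.proj k : (Fin 4 → ℝ) →L[ℝ] ℝ) with hL
  have hLapp : ∀ y : Fin 4 → ℝ, L y = ∑ k : Fin 4, y k * γ k := by
    intro y
    simp [hL, ContinuousLinearMap.sum_apply, mul_comm]
  have hLsingle : ∀ k : Fin 4, L (Pi.single k 1) = γ k := by
    intro k
    simp [hL, ContinuousLinearMap.sum_apply, Pi.single_apply]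
  set u : ℝ := ∑ k : Fin 4, x k * γ k with hu
  have hc : HasFDerivAt (fun y => Real.exp (L y)) (Real.exp (L x) • L) x :=
    (Real.hasDerivAt_exp (L x)).comp_hasFDerivAt x L.hasFDerivAt
  have hprod : HasFDerivAt (fun y => Real.exp (L y) • f y)
      (Real.exp (L x) • fderiv ℝ f x + (Real.exp (L x) • L).smulRight (f x)) x :=
    hc.smul hfd.hasFDerivAt
  have hfun : (fun y => Real.exp (∑ k : Fin 4, y k * γ k) • f y)
      = fun y => Real.exp (L y) • f y := by
    funext y; rw [hLapp]
  have hpd : ∀ k : Fin 4,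
      pderivQ k (fun y => Real.exp (∑ j : Fin 4, y j * γ j) • f y) x
      = Real.exp u • pderivQ k f x + (Real.exp u * γ k) • f x := by
    intro k
    rw [pderivQ, hfun, hprod.fderiv]
    simp [pderivQ, hLsingle, hu, hLapp, mul_smul]
  have hexp : Real.exp (-u) * Real.exp u = 1 := by
    rw [← Real.exp_add]; simp
  have hkey : ρ⁻¹ * (1 - ρ) * ρ = 1 - ρ := by
    have h1 : (1 - ρ) * ρ = ρ * (1 - ρ) := by
      rw [one_sub_mul, mul_one_sub]
    rw [mul_assoc, h1, ← mul_assoc, inv_mul_cancel₀ hρ, one_mul]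
  have hsum : f x * (∑ k : Fin 4, γ k • ψ k) * ρ = f x * (1 - ρ) := by
    rw [← hγ, mul_assoc, hkey]
  calc Real.exp (-u) •
        (fueterR ψ (fun y => Real.exp (∑ k : Fin 4, y k * γ k) • f y) x * ρ)
      = Real.exp (-u) • ((∑ k : Fin 4,
          (Real.exp u • pderivQ k f x + (Real.exp u * γ k) • f x) * ψ k) * ρ) := by
        rw [fueterR]
        congr 2
        exact Finset.sum_congr rfl fun k _ => by rw [hpd k]
    _ = ∑ k : Fin 4, (pderivQ k f x * ψ k * ρ + γ k • (f x * ψ k * ρ)) := by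
        rw [Finset.sum_mul, Finset.smul_sum]
        refine Finset.sum_congr rfl fun k _ => ?_
        rw [add_mul, add_mul, smul_add]
        congr 1
        · rw [smul_mul_assoc, smul_mul_assoc, smul_smul, hexp, one_smul]
        · rw [smul_mul_assoc, smul_mul_assoc, smul_smul, ← mul_assoc, hexp, one_mul]
    _ = f x * (1 - ρ) + fueterR ψ f x * ρ := by
        rw [Finset.sum_add_distrib, fueterR, Finset.sum_mul, add_comm]
        congr 1
        rw [← hsum, Finset.mul_sum, Finset.sum_mul]
        exact Finset.sum_congr rfl fun k _ => by
          rw [mul_smul_comm, smul_mul_assoc]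
end
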